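/- Let F be the free group on two generators a and b, and let Δ = ⟨a², b²⟩ ≤ F be the subgroup generated by a² and b². Then a and b are recurrent directions for Δ, but the element ab is not a recurrent direction for Δ; in particular, the set of recurrent directions R_F(Δ) is not a subgroup of F. -/

import Mathlib

/-- The conjugation action of `γ` on subgroups: `Δ ↦ γ Δ γ⁻¹`. -/
def conjSubgroup {Γ : Type*} [Group Γ] (γ : Γ) (Δ : Subgroup Γ) : Subgroup Γ :=
  Subgroup.map (MulAut.conj γ).toMonoidHom Δ

/-- The Chabauty topology on `Subgroup Γ`: induced from the product of discrete
topologies on `Γ → Prop` via the membership indicator. -/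
def chabautyTopology (Γ : Type*) [Group Γ] : TopologicalSpace (Subgroup Γ) :=
  TopologicalSpace.induced (fun (Δ : Subgroup Γ) (g : Γ) => g ∈ Δ)
    (@Pi.topologicalSpace Γ (fun _ => Prop) (fun _ => ⊥))

/-- `γ` is a recurrent direction for `Δ`: every Chabauty-open neighbourhood `O` of `Δ`
contains `γ^n Δ γ^{-n}` for some `n ≥ 1`. -/
def IsRecurrentDirection {Γ : Type*} [Group Γ] (γ : Γ) (Δ : Subgroup Γ) : Prop :=
  ∀ O : Set (Subgroup Γ), (chabautyTopology Γ).IsOpen O → Δ ∈ O →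
    ∃ n : ℕ, 1 ≤ n ∧ conjSubgroup (γ ^ n) Δ ∈ O

/-- `Δ` is a boomerang subgroup if every `γ` is a recurrent direction for it. -/
def IsBoomerang {Γ : Type*} [Group Γ] (Δ : Subgroup Γ) : Prop :=
  ∀ γ : Γ, IsRecurrentDirection γ Δ

namespace RecurrentAux

/-- Conjugating a subgroup by one of its own members does nothing. -/
lemma conj_eq {Γ : Type*} [Group Γ] {Δ : Subgroup Γ} {γ : Γ} (h : γ ∈ Δ) :
    conjSubgroup γ Δ = Δ := by
  ext x
  simp only [conjSubgroup, Subgroup.mem_map, MulEquiv.coe_toMonoidHom, MulAut.conj_apply]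
  constructor
  · rintro ⟨d, hd, rfl⟩; exact mul_mem (mul_mem h hd) (inv_mem h)
  · intro hx; exact ⟨γ⁻¹ * x * γ, mul_mem (mul_mem (inv_mem h) hx) h, by group⟩

/-- If `γ²` lies in `Δ`, then `γ` is a recurrent direction for `Δ` (take `n = 2`). -/
lemma rec_of_sq_mem {Γ : Type*} [Group Γ] {Δ : Subgroup Γ} {γ : Γ} (h : γ ^ 2 ∈ Δ) :
    IsRecurrentDirection γ Δ := by
  intro O _ hO
  exact ⟨2, one_le_two, by rw [conj_eq h]; exact hO⟩

/-- The permutation `(x, y) ↦ (x + y, y)` of `ℤ²`, image of the generator `a`. -/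
def A : Equiv.Perm (ℤ × ℤ) where
  toFun p := (p.1 + p.2, p.2)
  invFun p := (p.1 - p.2, p.2)
  left_inv p := by simp
  right_inv p := by simp

/-- The coordinate swap of `ℤ²`, image of the generator `b`. -/
def B : Equiv.Perm (ℤ × ℤ) := Equiv.prodComm ℤ ℤ

lemma A_apply (p : ℤ × ℤ) : A p = (p.1 + p.2, p.2) := rfl
lemma B_apply (p : ℤ × ℤ) : B p = (p.2, p.1) := rfl

/-- The homomorphism `F → Perm ℤ²`, `a ↦ A`, `b ↦ B`. -/
def φ : FreeGroup Bool →* Equiv.Perm (ℤ × ℤ) :=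
  FreeGroup.lift (fun t => if t then B else A)

lemma φa : φ (FreeGroup.of false) = A := FreeGroup.lift_apply_of
lemma φb : φ (FreeGroup.of true) = B := FreeGroup.lift_apply_of

/-- The stabilizer of `(1, 0)` pulled back to the free group. -/
def S : Subgroup (FreeGroup Bool) where
  carrier := {w | φ w (1, 0) = (1, 0)}
  one_mem' := by simp
  mul_mem' := fun {x y} hx hy => by
    simp only [Set.mem_setOf_eq, map_mul, Equiv.Perm.mul_apply] at *
    rw [hy, hx]
  inv_mem' := fun {x} hx => by
    simp only [Set.mem_setOf_eq, map_inv] at *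
    conv_lhs => rw [← hx]
    simp

lemma mem_S {w : FreeGroup Bool} : w ∈ S ↔ φ w (1, 0) = (1, 0) := Iff.rfl

/-- `a²` and `b²` both fix `(1, 0)`, so `Δ ≤ S`. -/
lemma Δ_le_S : Subgroup.closure {FreeGroup.of false ^ 2, FreeGroup.of true ^ 2} ≤ S := by
  rw [Subgroup.closure_le]
  rintro x (rfl | rfl) <;>
    simp [mem_S, map_pow, φa, φb, sq, Equiv.Perm.mul_apply, A_apply, B_apply]

/-- The image of `ab`. -/
def C : Equiv.Perm (ℤ × ℤ) := A * B

lemma C_apply (p : ℤ × ℤ) : C p = (p.2 + p.1, p.1) := rfl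

/-- The `C`-orbit of `(1, 0)` consists of positive vectors, with strictly
positive second coordinate from step `1` on. -/
lemma orbit (n : ℕ) : 1 ≤ ((C ^ n) ((1 : ℤ), (0 : ℤ))).1 ∧ 0 ≤ ((C ^ n) ((1:ℤ), (0:ℤ))).2 ∧
    (1 ≤ n → 1 ≤ ((C ^ n) ((1:ℤ), (0:ℤ))).2) := by
  induction n with
  | zero => simp
  | succ n ih =>
    obtain ⟨h1, h2, _⟩ := ih
    rw [pow_succ']
    simp only [Equiv.Perm.mul_apply, C_apply]
    exact ⟨by omega, by omega, fun _ => by omega⟩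

/-- `ab` is not a recurrent direction for `Δ = ⟨a², b²⟩`. -/
lemma not_rec : ¬ IsRecurrentDirection (FreeGroup.of false * FreeGroup.of true)
    (Subgroup.closure {FreeGroup.of false ^ 2, FreeGroup.of true ^ 2}) := by
  intro h
  obtain ⟨n, hn1, hn⟩ := h
    ((fun (H : Subgroup (FreeGroup Bool)) (g : FreeGroup Bool) => g ∈ H) ⁻¹'
      {f : FreeGroup Bool → Prop | f (FreeGroup.of false ^ 2)})
    (by
      refine ⟨{f : FreeGroup Bool → Prop | f (FreeGroup.of false ^ 2)}, ?_, rfl⟩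
      letI : TopologicalSpace Prop := ⊥
      haveI : DiscreteTopology Prop := ⟨rfl⟩
      exact (continuous_apply (A := fun _ : FreeGroup Bool => Prop)
        (FreeGroup.of false ^ 2)).isOpen_preimage {p : Prop | p} (isOpen_discrete _))
    (Subgroup.subset_closure (Set.mem_insert _ _))
  have hmem : FreeGroup.of false ^ 2 ∈
      conjSubgroup ((FreeGroup.of false * FreeGroup.of true) ^ n)
        (Subgroup.closure {FreeGroup.of false ^ 2, FreeGroup.of true ^ 2}) := hn
  rw [conjSubgroup, Subgroup.mem_map] at hmem
  obtain ⟨d, hd, hde⟩ := hmem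
  simp only [MulEquiv.coe_toMonoidHom, MulAut.conj_apply] at hde
  have hdval : d = ((FreeGroup.of false * FreeGroup.of true) ^ n)⁻¹ *
      FreeGroup.of false ^ 2 * (FreeGroup.of false * FreeGroup.of true) ^ n := by
    rw [← hde]; group
  have hdS : φ d ((1 : ℤ), (0 : ℤ)) = (1, 0) := Δ_le_S hd
  rw [hdval] at hdS
  have hφc : φ (FreeGroup.of false * FreeGroup.of true) = C := by
    rw [map_mul, φa, φb]; rfl
  simp only [map_mul, map_inv, map_pow, hφc, φa] at hdS
  have key : (A * A) ((C ^ n) ((1:ℤ), (0:ℤ))) = (C ^ n) ((1:ℤ), (0:ℤ)) := by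
    have h2 := congrArg (C ^ n) hdS
    simp only [Equiv.Perm.mul_apply, sq] at hdS h2 ⊢
    rw [show ∀ (e : Equiv.Perm (ℤ × ℤ)) x, e (e⁻¹ x) = x from fun e x => e.apply_symm_apply x] at h2
    exact h2
  obtain ⟨h1, h2, h3⟩ := orbit n
  have hy := h3 hn1
  set q : ℤ × ℤ := (C ^ n) ((1:ℤ), (0:ℤ)) with hq
  have key2 : ((q.1 + q.2 + q.2 : ℤ), q.2) = q := key
  have := congrArg Prod.fst key2
  simp only at this
  omega

end RecurrentAux

theorem recurrent_directions_not_subgroup :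
    IsRecurrentDirection (FreeGroup.of false)
      (Subgroup.closure {FreeGroup.of false ^ 2, FreeGroup.of true ^ 2}) ∧
    IsRecurrentDirection (FreeGroup.of true)
      (Subgroup.closure {FreeGroup.of false ^ 2, FreeGroup.of true ^ 2}) ∧
    ¬ IsRecurrentDirection (FreeGroup.of false * FreeGroup.of true)
      (Subgroup.closure {FreeGroup.of false ^ 2, FreeGroup.of true ^ 2}) ∧
    ¬ ∃ H : Subgroup (FreeGroup Bool), (H : Set (FreeGroup Bool)) =
      {γ : FreeGroup Bool | IsRecurrentDirection γ
        (Subgroup.closure {FreeGroup.of false ^ 2, FreeGroup.of true ^ 2})} := by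
  have ha : IsRecurrentDirection (FreeGroup.of false)
      (Subgroup.closure {FreeGroup.of false ^ 2, FreeGroup.of true ^ 2}) :=
    RecurrentAux.rec_of_sq_mem (Subgroup.subset_closure (Set.mem_insert _ _))
  have hb : IsRecurrentDirection (FreeGroup.of true)
      (Subgroup.closure {FreeGroup.of false ^ 2, FreeGroup.of true ^ 2}) :=
    RecurrentAux.rec_of_sq_mem
      (Subgroup.subset_closure (Set.mem_insert_of_mem _ (Set.mem_singleton _)))
  refine ⟨ha, hb, RecurrentAux.not_rec, ?_⟩
  rintro ⟨H, hH⟩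
  have haH : FreeGroup.of false ∈ H := by
    rw [← SetLike.mem_coe, hH]; exact ha
  have hbH : FreeGroup.of true ∈ H := by
    rw [← SetLike.mem_coe, hH]; exact hb
  have : FreeGroup.of false * FreeGroup.of true ∈ H := mul_mem haH hbH
  rw [← SetLike.mem_coe, hH] at this
  exact RecurrentAux.not_rec this
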